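/- Let F ∈ F_q[x] be nonconstant with value set V_F = {γ_0, ..., γ_r}, and suppose T(F) = θ(x^q - x)F' for some θ ∈ F_q* where T = ∏_{i=0}^r (x - γ_i). If α is a root of F - γ_i lying in the algebraic closure of F_q but not in F_q, and k is its multiplicity, then p divides k. -/

import Mathlib

open Polynomial

theorem stmt_2 {Fq : Type*} [Field Fq] [Fintype Fq] [DecidableEq Fq]
    (p q : ℕ) [Fact p.Prime] [CharP Fq p] (hq : Fintype.card Fq = q)
    (F : Polynomial Fq) (hF : 0 < F.natDegree)
    (θ : Fq) (hθ : θ ≠ 0)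
    (T : Polynomial Fq)
    (hT : T = ∏ γ ∈ Finset.image (fun a => F.eval a) Finset.univ,
            (Polynomial.X - Polynomial.C γ))
    (heq : T.comp F = Polynomial.C θ * (Polynomial.X ^ q - Polynomial.X) *
      Polynomial.derivative F)
    (γ : Fq) (hγ : γ ∈ Finset.image (fun a => F.eval a) Finset.univ)
    (α : AlgebraicClosure Fq)
    (hα : α ∉ Set.range (algebraMap Fq (AlgebraicClosure Fq)))
    (hroot : ((F - Polynomial.C γ).map (algebraMap Fq (AlgebraicClosure Fq))).IsRoot α)
    (k : ℕ)
    (hk : k = ((F - Polynomial.C γ).map (algebraMap Fq (AlgebraicClosure Fq))).rootMultiplicity α) :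
    p ∣ k := by
  classical
  let φ : Fq →+* AlgebraicClosure Fq := algebraMap Fq (AlgebraicClosure Fq)
  have hφinj : Function.Injective φ := φ.injective
  let S := Finset.image (fun a => F.eval a) Finset.univ
  -- basic nonvanishing facts
  have hq1 : 1 < q := hq ▸ Fintype.one_lt_card
  have hFC : ∀ γ' : Fq, F - Polynomial.C γ' ≠ 0 := by
    intro γ' h
    have h2 : (F - Polynomial.C γ').natDegree = F.natDegree := natDegree_sub_C
    rw [h] at h2
    simp at h2
    omega
  have hGne : (F - Polynomial.C γ).map φ ≠ 0 := by
    rw [Ne, Polynomial.map_eq_zero_iff hφinj]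
    exact hFC γ
  have hk1 : 1 ≤ k := by
    rw [hk]
    exact (Polynomial.rootMultiplicity_pos hGne).2 hroot
  -- T.comp F as a product
  have hTF : T.comp F = ∏ γ' ∈ S, (F - Polynomial.C γ') := by
    rw [hT, Polynomial.prod_comp]
    simp [Polynomial.sub_comp]
    rfl
  -- map the main equation to the closure
  have heqK : ∏ γ' ∈ S, ((F - Polynomial.C γ').map φ) =
      Polynomial.C (φ θ) * (Polynomial.X ^ q - Polynomial.X) *
        derivative ((F - Polynomial.C γ).map φ) := by
    have h1 := congrArg (Polynomial.map φ) (hTF ▸ heq)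
    rw [Polynomial.map_prod] at h1
    rw [h1]
    have hdG : derivative ((F - Polynomial.C γ).map φ) = (derivative F).map φ := by
      rw [derivative_map, derivative_sub, derivative_C, sub_zero]
    rw [hdG]
    simp [Polynomial.map_mul, Polynomial.map_sub, Polynomial.map_pow]
  -- the product is nonzero
  have hprodne : (∏ γ' ∈ S, ((F - Polynomial.C γ').map φ)) ≠ 0 := by
    apply Finset.prod_ne_zero_iff.2
    intro γ' _
    rw [Ne, Polynomial.map_eq_zero_iff hφinj]
    exact hFC γ'
  have hsplit : (∏ γ' ∈ S, ((F - Polynomial.C γ').map φ)) =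
      (F - Polynomial.C γ).map φ * ∏ γ' ∈ S.erase γ, ((F - Polynomial.C γ').map φ) :=
    (Finset.mul_prod_erase S _ hγ).symm
  -- eval of F.map φ at α is φ γ
  have hevalF : Polynomial.eval α (F.map φ) = φ γ := by
    have h2 : Polynomial.eval α ((F - Polynomial.C γ).map φ) = 0 := hroot
    rw [Polynomial.map_sub, Polynomial.map_C, Polynomial.eval_sub, Polynomial.eval_C,
      sub_eq_zero] at h2
    exact h2
  -- root multiplicity of the LHS product
  have hLHS : Polynomial.rootMultiplicity α (∏ γ' ∈ S, ((F - Polynomial.C γ').map φ)) = k := by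
    rw [hsplit, Polynomial.rootMultiplicity_mul (hsplit ▸ hprodne)]
    have hrest : Polynomial.rootMultiplicity α
        (∏ γ' ∈ S.erase γ, ((F - Polynomial.C γ').map φ)) = 0 := by
      apply Polynomial.rootMultiplicity_eq_zero
      intro h
      rw [Polynomial.IsRoot, Polynomial.eval_prod, Finset.prod_eq_zero_iff] at h
      obtain ⟨γ', hγ', h⟩ := h
      rw [Polynomial.map_sub, Polynomial.map_C, Polynomial.eval_sub, Polynomial.eval_C,
        hevalF, sub_eq_zero] at h
      exact (Finset.mem_erase.1 hγ').1 (hφinj h.symm)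
    rw [hrest, ← hk, add_zero]
  -- α^q ≠ α since α ∉ Fq
  have hαq : Polynomial.eval α ((Polynomial.X : (AlgebraicClosure Fq)[X]) ^ q - Polynomial.X)
      ≠ 0 := by
    intro h
    have hsplits : ((Polynomial.X : Fq[X]) ^ q - Polynomial.X).Splits := by
      rw [Polynomial.splits_iff_card_roots]
      rw [← hq, FiniteField.roots_X_pow_card_sub_X,
        FiniteField.X_pow_card_sub_X_natDegree_eq Fq (hq ▸ hq1)]
      simp [Finset.card_univ]
    have hne : ((Polynomial.X : Fq[X]) ^ q - Polynomial.X).map φ ≠ 0 := by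
      rw [Ne, Polynomial.map_eq_zero_iff hφinj, ← hq]
      exact FiniteField.X_pow_card_sub_X_ne_zero Fq (hq ▸ hq1)
    have hmem : α ∈ (((Polynomial.X : Fq[X]) ^ q - Polynomial.X).map φ).roots := by
      rw [Polynomial.mem_roots hne]
      simpa [Polynomial.IsRoot] using h
    rw [Polynomial.Splits.roots_map hsplits φ, Multiset.mem_map] at hmem
    obtain ⟨a, _, ha⟩ := hmem
    exact hα ⟨a, ha⟩
  -- conclude
  by_contra hpk
  have hCharK : CharP (AlgebraicClosure Fq) p := charP_of_injective_algebraMap hφinj p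
  have hkK : (k : AlgebraicClosure Fq) ≠ 0 := by
    rw [Ne, CharP.cast_eq_zero_iff (AlgebraicClosure Fq) p]
    exact hpk
  have hderiv : (derivative ((F - Polynomial.C γ).map φ)).rootMultiplicity α = k - 1 := by
    rw [hk]
    exact Polynomial.derivative_rootMultiplicity_of_root_of_mem_nonZeroDivisors hroot
      (mem_nonZeroDivisors_of_ne_zero (hk ▸ hkK))
  have hRHSne : Polynomial.C (φ θ) *
      ((Polynomial.X : (AlgebraicClosure Fq)[X]) ^ q - Polynomial.X) *
      derivative ((F - Polynomial.C γ).map φ) ≠ 0 := heqK ▸ hprodne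
  have hRHS : Polynomial.rootMultiplicity α (Polynomial.C (φ θ) *
      ((Polynomial.X : (AlgebraicClosure Fq)[X]) ^ q - Polynomial.X) *
      derivative ((F - Polynomial.C γ).map φ)) = k - 1 := by
    rw [Polynomial.rootMultiplicity_mul hRHSne,
      Polynomial.rootMultiplicity_mul (left_ne_zero_of_mul hRHSne)]
    rw [Polynomial.rootMultiplicity_eq_zero (by
      simp only [Polynomial.IsRoot, Polynomial.eval_C]
      exact fun h => hθ (hφinj (by simpa using h)))]
    rw [Polynomial.rootMultiplicity_eq_zero hαq, hderiv]
    omega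
  rw [heqK, hRHS] at hLHS
  omega
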